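/- arXiv:1401.7514 — 2 statements merged into one kernel-verified Lean document; each statement's English description precedes it below -/
import Mathlib

section
/- Let G be a connected simple graph with minimum degree δ ≥ 2 such that for every edge uv of G one has |d_u − d_v| ≤ (2k − 1)² where k = min(d_u, d_v). Then GA(G) > ABC(G). -/
open SimpleGraph

lemma keyZ (a b : ℤ) (ha : 2 ≤ a) (hab : a ≤ b) (hb : b ≤ a + (2*a-1)^2) :
    (a+b-2)*(a+b)^2 < 4*a^2*b^2 := by
  nlinarith [sq_nonneg (b-a), sq_nonneg (a-2), mul_nonneg (sub_nonneg.2 hab) (sub_nonneg.2 hab),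
    mul_nonneg (mul_nonneg (sub_nonneg.2 hab) (sub_nonneg.2 hab)) (by linarith : (0:ℤ) ≤ a - 2),
    mul_nonneg (sub_nonneg.2 hb) (sub_nonneg.2 hab)]

lemma keyN (a b : ℕ) (ha : 2 ≤ a) (hb : 2 ≤ b)
    (h : ((a : ℤ) - (b : ℤ)).natAbs ≤ (2 * min a b - 1)^2) :
    ((a:ℤ)+b-2)*((a:ℤ)+b)^2 < 4*(a:ℤ)^2*(b:ℤ)^2 := by
  rcases le_total a b with hab | hab
  · have hmin : min a b = a := min_eq_left hab
    rw [hmin] at h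
    have h2 : ((b : ℤ) - a) ≤ ((2*a - 1 : ℕ) : ℤ)^2 := by
      calc ((b:ℤ) - a) ≤ (((a:ℤ) - b).natAbs : ℤ) := by omega
        _ ≤ (((2*a-1)^2 : ℕ) : ℤ) := by exact_mod_cast h
        _ = ((2*a-1:ℕ):ℤ)^2 := by push_cast; ring
    have h3 : ((2*a - 1 : ℕ) : ℤ) = 2*(a:ℤ) - 1 := by omega
    rw [h3] at h2
    exact keyZ a b (by exact_mod_cast ha) (by exact_mod_cast hab) (by linarith)
  · have hmin : min a b = b := min_eq_right hab
    rw [hmin] at h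
    have h2 : ((a : ℤ) - b) ≤ ((2*b - 1 : ℕ) : ℤ)^2 := by
      calc ((a:ℤ) - b) ≤ (((a:ℤ) - b).natAbs : ℤ) := Int.le_natAbs
        _ ≤ (((2*b-1)^2 : ℕ) : ℤ) := by exact_mod_cast h
        _ = ((2*b-1:ℕ):ℤ)^2 := by push_cast; ring
    have h3 : ((2*b - 1 : ℕ) : ℤ) = 2*(b:ℤ) - 1 := by omega
    rw [h3] at h2
    have := keyZ b a (by exact_mod_cast hb) (by exact_mod_cast hab) (by linarith)
    linarith [this]

lemma keyR (a b : ℕ) (ha : 2 ≤ a) (hb : 2 ≤ b)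
    (h : ((a : ℤ) - (b : ℤ)).natAbs ≤ (2 * min a b - 1)^2) :
    Real.sqrt (((a:ℝ) + b - 2) / ((a:ℝ) * b)) <
      2 * Real.sqrt ((a:ℝ) * b) / ((a:ℝ) + b) := by
  have haR : (2:ℝ) ≤ a := by exact_mod_cast ha
  have hbR : (2:ℝ) ≤ b := by exact_mod_cast hb
  have hpos1 : (0:ℝ) < (a:ℝ) * b := by nlinarith
  have hpos2 : (0:ℝ) < (a:ℝ) + b := by linarith
  have hk : ((a:ℝ) + b - 2) * ((a:ℝ) + b)^2 < 4 * (a:ℝ)^2 * (b:ℝ)^2 := by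
    have := keyN a b ha hb h
    have : (((a:ℤ)+b-2)*((a:ℤ)+b)^2 : ℝ) < ((4*(a:ℤ)^2*(b:ℤ)^2 : ℤ) : ℝ) := by
      exact_mod_cast this
    push_cast at this
    linarith
  have h1 : ((a:ℝ) + b - 2) / ((a:ℝ) * b) < 4 * ((a:ℝ) * b) / (((a:ℝ) + b)^2) := by
    rw [div_lt_div_iff₀ hpos1 (by positivity)]
    nlinarith
  calc Real.sqrt (((a:ℝ) + b - 2) / ((a:ℝ) * b))
      < Real.sqrt (4 * ((a:ℝ) * b) / (((a:ℝ) + b)^2)) := by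
        apply Real.sqrt_lt_sqrt (div_nonneg (by linarith) hpos1.le) h1
    _ = 2 * Real.sqrt ((a:ℝ) * b) / ((a:ℝ) + b) := by
        rw [show 4 * ((a:ℝ) * b) / (((a:ℝ) + b)^2)
            = (2 * Real.sqrt ((a:ℝ) * b) / ((a:ℝ) + b))^2 by
          rw [div_pow, mul_pow, Real.sq_sqrt hpos1.le]; ring]
        exact Real.sqrt_sq (by positivity)


theorem aux {V : Type*} [Fintype V] (G : SimpleGraph V) [DecidableEq V] [DecidableRel G.Adj]
    [Fintype G.edgeSet]
    (hconn : G.Connected) (hδ : 2 ≤ G.minDegree)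
    (h : ∀ u v : V, G.Adj u v →
      ((G.degree u : ℤ) - (G.degree v : ℤ)).natAbs ≤
        (2 * min (G.degree u) (G.degree v) - 1)^2)
    (keyR : ∀ a b : ℕ, 2 ≤ a → 2 ≤ b →
      ((a : ℤ) - (b : ℤ)).natAbs ≤ (2 * min a b - 1)^2 →
      Real.sqrt (((a:ℝ) + b - 2) / ((a:ℝ) * b)) <
        2 * Real.sqrt ((a:ℝ) * b) / ((a:ℝ) + b)) :
    ∑ e ∈ G.edgeFinset,
      Sym2.lift ⟨fun u v =>
        Real.sqrt (((G.degree u : ℝ) + (G.degree v : ℝ) - 2) /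
          ((G.degree u : ℝ) * (G.degree v : ℝ))),
        fun u v => by
          dsimp only; rw [mul_comm ((G.degree u : ℝ)), add_comm ((G.degree u : ℝ))]⟩ e
    < ∑ e ∈ G.edgeFinset,
      Sym2.lift ⟨fun u v =>
        2 * Real.sqrt ((G.degree u : ℝ) * (G.degree v : ℝ)) /
          ((G.degree u : ℝ) + (G.degree v : ℝ)),
        fun u v => by
          dsimp only; rw [mul_comm ((G.degree u : ℝ)), add_comm ((G.degree u : ℝ))]⟩ e := by
  have hne : G.edgeFinset.Nonempty := by
    obtain ⟨v⟩ := hconn.nonempty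
    have hdv : 0 < G.degree v := lt_of_lt_of_le (by norm_num)
      (le_trans hδ (G.minDegree_le_degree v))
    obtain ⟨w, hw⟩ := (G.degree_pos_iff_exists_adj v).1 hdv
    exact ⟨s(v, w), by rwa [mem_edgeFinset, mem_edgeSet]⟩
  apply Finset.sum_lt_sum_of_nonempty hne
  intro e he
  revert he
  induction e using Sym2.ind with
  | _ u v =>
    intro he
    rw [mem_edgeFinset, mem_edgeSet] at he
    simp only [Sym2.lift_mk]
    exact keyR (G.degree u) (G.degree v)
      (le_trans hδ (G.minDegree_le_degree u))
      (le_trans hδ (G.minDegree_le_degree v))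
      (h u v he)


/-- The first geometric-arithmetic index of a finite simple graph:
`GA(G) = Σ_{uv ∈ E(G)} 2√(dᵤ dᵥ)/(dᵤ + dᵥ)`. -/
noncomputable def GA {V : Type*} [Finite V] (G : SimpleGraph V) : ℝ := by
  classical
  have : Fintype V := Fintype.ofFinite V
  exact ∑ e ∈ G.edgeFinset,
    Sym2.lift ⟨fun u v =>
      2 * Real.sqrt ((G.degree u : ℝ) * (G.degree v : ℝ)) /
        ((G.degree u : ℝ) + (G.degree v : ℝ)),
      fun u v => by
        dsimp only; rw [mul_comm ((G.degree u : ℝ)), add_comm ((G.degree u : ℝ))]⟩ e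

/-- The atom-bond connectivity index of a finite simple graph:
`ABC(G) = Σ_{uv ∈ E(G)} √((dᵤ + dᵥ - 2)/(dᵤ dᵥ))`. -/
noncomputable def ABC {V : Type*} [Finite V] (G : SimpleGraph V) : ℝ := by
  classical
  have : Fintype V := Fintype.ofFinite V
  exact ∑ e ∈ G.edgeFinset,
    Sym2.lift ⟨fun u v =>
      Real.sqrt (((G.degree u : ℝ) + (G.degree v : ℝ) - 2) /
        ((G.degree u : ℝ) * (G.degree v : ℝ))),
      fun u v => by
        dsimp only; rw [mul_comm ((G.degree u : ℝ)), add_comm ((G.degree u : ℝ))]⟩ e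

/-- The degree of a vertex (classical wrapper around `SimpleGraph.degree`). -/
noncomputable def deg {V : Type*} [Finite V] (G : SimpleGraph V) (v : V) : ℕ := by
  classical
  have : Fintype V := Fintype.ofFinite V
  exact G.degree v

/-- The maximum degree `Δ` of a finite simple graph. -/
noncomputable def maxDeg {V : Type*} [Finite V] (G : SimpleGraph V) : ℕ := by
  classical
  have : Fintype V := Fintype.ofFinite V
  exact G.maxDegree

/-- The minimum degree `δ` of a finite simple graph. -/
noncomputable def minDeg {V : Type*} [Finite V] (G : SimpleGraph V) : ℕ := by
  classical
  have : Fintype V := Fintype.ofFinite V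
  exact G.minDegree

/-- If `G` is a connected graph with minimum degree `δ ≥ 2` such that for
every edge `uv` of `G` one has `|dᵤ − dᵥ| ≤ (2k − 1)²` where `k = min(dᵤ, dᵥ)`, then
`GA(G) > ABC(G)`. -/
theorem stmt_8 {V : Type*} [Fintype V] (G : SimpleGraph V)
    (hconn : G.Connected) (hδ : 2 ≤ minDeg G)
    (h : ∀ u v : V, G.Adj u v →
      ((deg G u : ℤ) - (deg G v : ℤ)).natAbs ≤ (2 * min (deg G u) (deg G v) - 1)^2) :
    ABC G < GA G := by
  classical
  unfold ABC GA
  unfold minDeg at hδ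
  unfold deg at h
  dsimp only at hδ h ⊢
  exact @aux V (Fintype.ofFinite V) G _ _ (@SimpleGraph.fintypeEdgeSet V G (@Sym2.instFintype V (Fintype.ofFinite V)) (fun a b => Classical.propDecidable (G.Adj a b))) hconn hδ h keyR
end

section
/- Let G be a connected simple graph on n vertices with minimum degree δ ≥ 2. Then (√(2(n−2))/(n−1))·GA(G) ≤ ABC(G) ≤ ((n+1)/(4√(n−1)))·GA(G), with equality on the left if and only if G is isomorphic to the complete graph K_n, and with equality on the right if and only if G is isomorphic to the cycle C_3. -/
open SimpleGraph

/-! ### Auxiliary analytic lemmas -/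

private theorem aux_Qpos' (N s : ℝ) (hN : 2 < N) (ha : N+2 ≤ s) (hb : s ≤ 2*N) :
    0 < -4*s^2 + N^2*(N+4)*s - N^3*(N+2) := by
  have hN2 : (0:ℝ) < N-2 := by linarith
  have e1 : (0:ℝ) < 4*(N+2)*(N-2)*(N+1) := by positivity
  have e2 : (0:ℝ) < N^2*(N-2)*(N+8) := by positivity
  rcases lt_or_eq_of_le hb with hb' | rfl
  · nlinarith [mul_pos (by linarith : (0:ℝ) < 2*N-s) e1,
      mul_nonneg (by linarith : (0:ℝ) ≤ s-(N+2)) e2.le,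
      mul_nonneg (mul_nonneg hN2.le (by linarith : (0:ℝ) ≤ s-(N+2))) (by linarith : (0:ℝ) ≤ 2*N-s)]
  · nlinarith [mul_pos hN2 e2]

private theorem aux_polyA (N x y : ℝ) (hN : 2 ≤ N) (hx2 : 2 ≤ x) (hxN : x ≤ N)
    (hy2 : 2 ≤ y) (hyN : y ≤ N) :
    8*(N-1)*(x*y)^2 ≤ N^2*(x+y)^2*(x+y-2) := by
  have h2 : 0 ≤ (2*N-(x+y))*((N-1)*(x+y)-2*N) :=
    mul_nonneg (by linarith) (by nlinarith)
  nlinarith [mul_nonneg h2 (sq_nonneg (x+y)),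
    mul_nonneg (mul_nonneg (by linarith : (0:ℝ) ≤ N-1) (sq_nonneg (x-y)))
      (by nlinarith : (0:ℝ) ≤ (x+y)^2 + 4*(x*y))]

private theorem aux_polyA_strict (N x y : ℝ) (hN : 2 ≤ N) (hx2 : 2 ≤ x) (hxN : x ≤ N)
    (hy2 : 2 ≤ y) (hyN : y ≤ N) (h : x < N ∨ y < N) :
    8*(N-1)*(x*y)^2 < N^2*(x+y)^2*(x+y-2) := by
  have h2 : 0 ≤ (2*N-(x+y))*((N-1)*(x+y)-2*N) :=
    mul_nonneg (by rcases h with h|h <;> linarith) (by nlinarith)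
  rcases eq_or_ne x y with rfl | hxy
  · have hxN' : x < N := by rcases h with h|h <;> linarith
    have hN2 : 2 < N := by linarith
    have h2' : 0 < (2*N-(x+x))*((N-1)*(x+x)-2*N) :=
      mul_pos (by linarith) (by nlinarith)
    nlinarith [mul_pos h2' (by nlinarith : (0:ℝ) < (x+x)^2)]
  · have hs : 0 < (x-y)^2 := by have := sub_ne_zero.mpr hxy; positivity
    nlinarith [mul_nonneg h2 (sq_nonneg (x+y)),
      mul_pos (mul_pos (by linarith : (0:ℝ) < N-1) hs)
        (by nlinarith : (0:ℝ) < (x+y)^2 + 4*(x*y))]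

private theorem aux_polyB (N x y : ℝ) (hN : 2 ≤ N) (hx2 : 2 ≤ x) (hxN : x ≤ N)
    (hy2 : 2 ≤ y) (hyN : y ≤ N) :
    4*N*(x+y)^2*(x+y-2) ≤ (N+2)^2*(x*y)^2 := by
  rcases le_or_gt (x+y) (N+2) with hs | hs
  · have hp : (0:ℝ) ≤ x*y - 2*(x+y) + 4 := by
      nlinarith [mul_nonneg (by linarith : (0:ℝ) ≤ x-2) (by linarith : (0:ℝ) ≤ y-2)]
    have t1 := mul_nonneg (mul_nonneg hp (by nlinarith : (0:ℝ) ≤ x*y + 2*(x+y) - 4)) (sq_nonneg (N+2))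
    have t2 := mul_nonneg (by linarith : (0:ℝ) ≤ 4*(x+y-2))
      (mul_nonneg (by linarith : (0:ℝ) ≤ N+2-(x+y)) (by nlinarith : (0:ℝ) ≤ N*(x+y)-2*(N+2)))
    nlinarith [t1, t2]
  · have hN2 : 2 < N := by linarith
    have hQ := aux_Qpos' N (x+y) hN2 (le_of_lt hs) (by linarith)
    have hp : (0:ℝ) ≤ x*y - N*(x+y) + N^2 := by
      nlinarith [mul_nonneg (by linarith : (0:ℝ) ≤ N-x) (by linarith : (0:ℝ) ≤ N-y)]
    have t1 := mul_nonneg (mul_nonneg hp (by nlinarith : (0:ℝ) ≤ x*y + N*(x+y) - N^2)) (sq_nonneg (N+2))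
    have t2 := mul_nonneg (mul_nonneg (by linarith : (0:ℝ) ≤ N) (by linarith : (0:ℝ) ≤ x+y-(N+2))) hQ.le
    nlinarith [t1, t2]

private theorem aux_polyB_strict (N x y : ℝ) (hN : 2 ≤ N) (hx2 : 2 ≤ x) (hxN : x ≤ N)
    (hy2 : 2 ≤ y) (hyN : y ≤ N)
    (hne : ¬((x = 2 ∧ y = N) ∨ (x = N ∧ y = 2))) :
    4*N*(x+y)^2*(x+y-2) < (N+2)^2*(x*y)^2 := by
  rcases lt_trichotomy (x+y) (N+2) with hs | hs | hs
  · have hN2 : 2 < N := by linarith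
    have hp : (0:ℝ) ≤ x*y - 2*(x+y) + 4 := by
      nlinarith [mul_nonneg (by linarith : (0:ℝ) ≤ x-2) (by linarith : (0:ℝ) ≤ y-2)]
    have t1 := mul_nonneg (mul_nonneg hp (by nlinarith : (0:ℝ) ≤ x*y + 2*(x+y) - 4)) (sq_nonneg (N+2))
    have t2 := mul_pos (mul_pos (by linarith : (0:ℝ) < 4*(x+y-2))
      (by linarith : (0:ℝ) < N+2-(x+y))) (by nlinarith : (0:ℝ) < N*(x+y)-2*(N+2))
    nlinarith [t1, t2]
  · have hx : x ≠ 2 := by rintro rfl; exact hne (Or.inl ⟨rfl, by linarith⟩)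
    have hy : y ≠ 2 := by rintro rfl; exact hne (Or.inr ⟨by linarith, rfl⟩)
    have hp : (0:ℝ) < x*y - 2*(x+y) + 4 := by
      nlinarith [mul_pos
        (by rcases lt_or_eq_of_le hx2 with h|h; exacts [by linarith, absurd h.symm hx] : (0:ℝ) < x-2)
        (by rcases lt_or_eq_of_le hy2 with h|h; exacts [by linarith, absurd h.symm hy] : (0:ℝ) < y-2)]
    have t1 := mul_pos (mul_pos hp (by nlinarith : (0:ℝ) < x*y + 2*(x+y) - 4))
      (by positivity : (0:ℝ) < (N+2)^2)
    have t2 := mul_nonneg (by linarith : (0:ℝ) ≤ 4*(x+y-2))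
      (mul_nonneg (by linarith : (0:ℝ) ≤ N+2-(x+y)) (by nlinarith : (0:ℝ) ≤ N*(x+y)-2*(N+2)))
    nlinarith [t1, t2]
  · have hN2 : 2 < N := by linarith
    have hQ := aux_Qpos' N (x+y) hN2 (le_of_lt hs) (by linarith)
    have hp : (0:ℝ) ≤ x*y - N*(x+y) + N^2 := by
      nlinarith [mul_nonneg (by linarith : (0:ℝ) ≤ N-x) (by linarith : (0:ℝ) ≤ N-y)]
    have t1 := mul_nonneg (mul_nonneg hp (by nlinarith : (0:ℝ) ≤ x*y + N*(x+y) - N^2)) (sq_nonneg (N+2))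
    have t2 := mul_pos (mul_pos (by linarith : (0:ℝ) < N) (by linarith : (0:ℝ) < x+y-(N+2))) hQ
    nlinarith [t1, t2]

private theorem aux_sqrtA (N x y : ℝ) (hN : 2 ≤ N) (hx2 : 2 ≤ x) (hxN : x ≤ N)
    (hy2 : 2 ≤ y) (hyN : y ≤ N) :
    Real.sqrt (2*(N-1))/N * (2*Real.sqrt (x*y)/(x+y)) ≤ Real.sqrt ((x+y-2)/(x*y)) := by
  have hp : (0:ℝ) < x*y := by nlinarith
  have hs : (0:ℝ) < x+y := by linarith
  have hN0 : (0:ℝ) < N := by linarith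
  have hL : (0:ℝ) ≤ Real.sqrt (2*(N-1))/N * (2*Real.sqrt (x*y)/(x+y)) :=
    mul_nonneg (div_nonneg (Real.sqrt_nonneg _) hN0.le) (div_nonneg (by positivity) hs.le)
  rw [Real.le_sqrt hL (div_nonneg (by linarith) hp.le)]
  have e : (Real.sqrt (2*(N-1))/N * (2*Real.sqrt (x*y)/(x+y)))^2
      = (2*(N-1)) * (4*(x*y)) / (N^2 * (x+y)^2) := by
    rw [div_mul_div_comm, div_pow, mul_pow, mul_pow,
      Real.sq_sqrt (by linarith : (0:ℝ) ≤ 2*(N-1)), Real.sq_sqrt hp.le]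
    ring
  rw [e, div_le_div_iff₀ (by positivity) hp]
  nlinarith [aux_polyA N x y hN hx2 hxN hy2 hyN]

private theorem aux_sqrtA_strict (N x y : ℝ) (hN : 2 ≤ N) (hx2 : 2 ≤ x) (hxN : x ≤ N)
    (hy2 : 2 ≤ y) (hyN : y ≤ N) (hor : x < N ∨ y < N) :
    Real.sqrt (2*(N-1))/N * (2*Real.sqrt (x*y)/(x+y)) < Real.sqrt ((x+y-2)/(x*y)) := by
  have hp : (0:ℝ) < x*y := by nlinarith
  have hs : (0:ℝ) < x+y := by linarith
  have hN0 : (0:ℝ) < N := by linarith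
  have hL : (0:ℝ) ≤ Real.sqrt (2*(N-1))/N * (2*Real.sqrt (x*y)/(x+y)) :=
    mul_nonneg (div_nonneg (Real.sqrt_nonneg _) hN0.le) (div_nonneg (by positivity) hs.le)
  rw [Real.lt_sqrt hL]
  have e : (Real.sqrt (2*(N-1))/N * (2*Real.sqrt (x*y)/(x+y)))^2
      = (2*(N-1)) * (4*(x*y)) / (N^2 * (x+y)^2) := by
    rw [div_mul_div_comm, div_pow, mul_pow, mul_pow,
      Real.sq_sqrt (by linarith : (0:ℝ) ≤ 2*(N-1)), Real.sq_sqrt hp.le]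
    ring
  rw [e, div_lt_div_iff₀ (by positivity) hp]
  nlinarith [aux_polyA_strict N x y hN hx2 hxN hy2 hyN hor]

private theorem aux_sqrtB (N x y : ℝ) (hN : 2 ≤ N) (hx2 : 2 ≤ x) (hxN : x ≤ N)
    (hy2 : 2 ≤ y) (hyN : y ≤ N) :
    Real.sqrt ((x+y-2)/(x*y)) ≤ (N+2)/(4*Real.sqrt N) * (2*Real.sqrt (x*y)/(x+y)) := by
  have hp : (0:ℝ) < x*y := by nlinarith
  have hs : (0:ℝ) < x+y := by linarith
  have hN0 : (0:ℝ) < N := by linarith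
  have hR : (0:ℝ) < (N+2)/(4*Real.sqrt N) * (2*Real.sqrt (x*y)/(x+y)) := by
    have h1 := Real.sqrt_pos.mpr hN0
    have h2 := Real.sqrt_pos.mpr hp
    positivity
  rw [show (N+2)/(4*Real.sqrt N) * (2*Real.sqrt (x*y)/(x+y))
      = Real.sqrt (((N+2)/(4*Real.sqrt N) * (2*Real.sqrt (x*y)/(x+y)))^2) from
      (Real.sqrt_sq hR.le).symm]
  apply Real.sqrt_le_sqrt
  have e : ((N+2)/(4*Real.sqrt N) * (2*Real.sqrt (x*y)/(x+y)))^2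
      = (N+2)^2 * (4*(x*y)) / ((16*N) * (x+y)^2) := by
    rw [div_mul_div_comm, div_pow, mul_pow, mul_pow, mul_pow, mul_pow,
      Real.sq_sqrt hp.le, Real.sq_sqrt hN0.le]
    ring
  rw [e, div_le_div_iff₀ hp (by positivity)]
  nlinarith [aux_polyB N x y hN hx2 hxN hy2 hyN]

private theorem aux_sqrtB_strict (N x y : ℝ) (hN : 2 ≤ N) (hx2 : 2 ≤ x) (hxN : x ≤ N)
    (hy2 : 2 ≤ y) (hyN : y ≤ N)
    (hne : ¬((x = 2 ∧ y = N) ∨ (x = N ∧ y = 2))) :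
    Real.sqrt ((x+y-2)/(x*y)) < (N+2)/(4*Real.sqrt N) * (2*Real.sqrt (x*y)/(x+y)) := by
  have hp : (0:ℝ) < x*y := by nlinarith
  have hs : (0:ℝ) < x+y := by linarith
  have hN0 : (0:ℝ) < N := by linarith
  have hR : (0:ℝ) < (N+2)/(4*Real.sqrt N) * (2*Real.sqrt (x*y)/(x+y)) := by
    have h1 := Real.sqrt_pos.mpr hN0
    have h2 := Real.sqrt_pos.mpr hp
    positivity
  rw [Real.sqrt_lt' hR]
  have e : ((N+2)/(4*Real.sqrt N) * (2*Real.sqrt (x*y)/(x+y)))^2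
      = (N+2)^2 * (4*(x*y)) / ((16*N) * (x+y)^2) := by
    rw [div_mul_div_comm, div_pow, mul_pow, mul_pow, mul_pow, mul_pow,
      Real.sq_sqrt hp.le, Real.sq_sqrt hN0.le]
    ring
  rw [e, div_lt_div_iff₀ hp (by positivity)]
  nlinarith [aux_polyB_strict N x y hN hx2 hxN hy2 hyN hne]

private theorem aux_eqA (N : ℝ) (hN : 2 ≤ N) :
    Real.sqrt (2*(N-1))/N * (2*Real.sqrt (N*N)/(N+N)) = Real.sqrt ((N+N-2)/(N*N)) := by
  have hN0 : (0:ℝ) < N := by linarith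
  rw [Real.sqrt_mul_self hN0.le,
    show (N+N-2)/(N*N) = 2*(N-1)/N^2 by ring,
    Real.sqrt_div (by linarith) _, Real.sqrt_sq hN0.le]
  field_simp
  ring

private theorem aux_eqB :
    Real.sqrt (((2:ℝ)+2-2)/(2*2)) = ((2:ℝ)+2)/(4*Real.sqrt 2) * (2*Real.sqrt (2*2)/(2+2)) := by
  have h2 : Real.sqrt ((2:ℝ)*2) = 2 := Real.sqrt_mul_self (by norm_num)
  have h2' : Real.sqrt (2:ℝ) ≠ 0 := by positivity
  rw [h2, show ((2:ℝ)+2-2)/(2*2) = 2⁻¹ by norm_num, Real.sqrt_inv]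
  rw [show ((2:ℝ)+2)/(4*Real.sqrt 2) * (2*2/(2+2)) = (Real.sqrt 2)⁻¹ by field_simp; ring]

/-! ### Graph-theoretic helpers -/

private noncomputable def gaF {V : Type*} [Fintype V] (G : SimpleGraph V) [DecidableRel G.Adj] :
    Sym2 V → ℝ :=
  Sym2.lift ⟨fun u v =>
      2 * Real.sqrt ((G.degree u : ℝ) * (G.degree v : ℝ)) /
        ((G.degree u : ℝ) + (G.degree v : ℝ)),
      fun u v => by
        dsimp only; rw [mul_comm ((G.degree u : ℝ)), add_comm ((G.degree u : ℝ))]⟩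

private noncomputable def abcF {V : Type*} [Fintype V] (G : SimpleGraph V) [DecidableRel G.Adj] :
    Sym2 V → ℝ :=
  Sym2.lift ⟨fun u v =>
      Real.sqrt (((G.degree u : ℝ) + (G.degree v : ℝ) - 2) /
        ((G.degree u : ℝ) * (G.degree v : ℝ))),
      fun u v => by
        dsimp only; rw [mul_comm ((G.degree u : ℝ)), add_comm ((G.degree u : ℝ))]⟩

private theorem gaF_mk {V : Type*} [Fintype V] (G : SimpleGraph V) [DecidableRel G.Adj] (u v : V) :
    gaF G s(u, v) = 2 * Real.sqrt ((G.degree u : ℝ) * (G.degree v : ℝ)) /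
        ((G.degree u : ℝ) + (G.degree v : ℝ)) := rfl

private theorem abcF_mk {V : Type*} [Fintype V] (G : SimpleGraph V) [DecidableRel G.Adj] (u v : V) :
    abcF G s(u, v) = Real.sqrt (((G.degree u : ℝ) + (G.degree v : ℝ) - 2) /
        ((G.degree u : ℝ) * (G.degree v : ℝ))) := rfl

private theorem GA_spec {V : Type*} [Fintype V] (G : SimpleGraph V) [DecidableRel G.Adj]
    [Fintype G.edgeSet] :
    GA G = ∑ e ∈ G.edgeFinset, gaF G e := by
  unfold GA gaF
  congr!

private theorem ABC_spec {V : Type*} [Fintype V] (G : SimpleGraph V) [DecidableRel G.Adj]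
    [Fintype G.edgeSet] :
    ABC G = ∑ e ∈ G.edgeFinset, abcF G e := by
  unfold ABC abcF
  congr!

private theorem minDeg_spec {V : Type*} [Fintype V] (G : SimpleGraph V) [DecidableRel G.Adj] :
    minDeg G = G.minDegree := by
  unfold minDeg
  congr!

private theorem aux_adj_all {V : Type*} [Fintype V] [DecidableEq V] (G : SimpleGraph V)
    [DecidableRel G.Adj] (u : V) (hu : G.degree u = Fintype.card V - 1) :
    ∀ w, w ≠ u → G.Adj u w := by
  intro w hw
  have hsub : G.neighborFinset u ⊆ Finset.univ.erase u := by
    intro x hx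
    rw [SimpleGraph.mem_neighborFinset] at hx
    exact Finset.mem_erase.mpr ⟨hx.ne', Finset.mem_univ _⟩
  have hcard : (Finset.univ.erase u).card ≤ (G.neighborFinset u).card := by
    rw [Finset.card_erase_of_mem (Finset.mem_univ _), Finset.card_univ,
      G.card_neighborFinset_eq_degree, hu]
  have := Finset.eq_of_subset_of_card_le hsub hcard
  rw [← SimpleGraph.mem_neighborFinset, this]
  exact Finset.mem_erase.mpr ⟨hw, Finset.mem_univ _⟩

private theorem aux_top {V : Type*} [Fintype V] [DecidableEq V] (G : SimpleGraph V)
    [DecidableRel G.Adj] (h : ∀ v, G.degree v = Fintype.card V - 1) : G = ⊤ := by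
  ext u v
  simp only [top_adj]
  exact ⟨fun h' => h'.ne, fun huv => aux_adj_all G u (h u) v (Ne.symm huv)⟩

private theorem aux_deg_of_adj_all {V : Type*} [Fintype V] [DecidableEq V] (G : SimpleGraph V)
    [DecidableRel G.Adj] (h : ∀ u w : V, u ≠ w → G.Adj u w) (v : V) :
    G.degree v = Fintype.card V - 1 := by
  have : G.neighborFinset v = Finset.univ.erase v := by
    ext w
    rw [SimpleGraph.mem_neighborFinset, Finset.mem_erase]
    constructor
    · exact fun h' => ⟨h'.ne', Finset.mem_univ _⟩
    · exact fun ⟨h1, _⟩ => (h v w (Ne.symm h1))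
  rw [← G.card_neighborFinset_eq_degree, this,
    Finset.card_erase_of_mem (Finset.mem_univ _), Finset.card_univ]

private theorem aux_cycle3 : (cycleGraph 3 : SimpleGraph (Fin 3)) = ⊤ := by
  ext a b
  simp only [SimpleGraph.cycleGraph_adj, top_adj]
  fin_cases a <;> fin_cases b <;> decide

/-- For a connected graph `G` on `n` vertices with minimum degree `δ ≥ 2`,
`(√(2(n−2))/(n−1))·GA(G) ≤ ABC(G) ≤ ((n+1)/(4√(n−1)))·GA(G)`, with equality on the left iff
`G ≅ Kₙ` and equality on the right iff `G ≅ C₃`. -/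
theorem stmt_9 {V : Type*} [Fintype V] (G : SimpleGraph V)
    (hconn : G.Connected) (hδ : 2 ≤ minDeg G)
    (n : ℕ) (hn : n = Fintype.card V) :
    (Real.sqrt (2 * ((n : ℝ) - 2)) / ((n : ℝ) - 1)) * GA G ≤ ABC G ∧
    ABC G ≤ (((n : ℝ) + 1) / (4 * Real.sqrt ((n : ℝ) - 1))) * GA G ∧
    ((Real.sqrt (2 * ((n : ℝ) - 2)) / ((n : ℝ) - 1)) * GA G = ABC G ↔
      Nonempty (G ≃g (⊤ : SimpleGraph V))) ∧
    (ABC G = (((n : ℝ) + 1) / (4 * Real.sqrt ((n : ℝ) - 1))) * GA G ↔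
      Nonempty (G ≃g cycleGraph 3)) := by
  classical
  have hGA : GA G = ∑ e ∈ G.edgeFinset, gaF G e := GA_spec G
  have hABC : ABC G = ∑ e ∈ G.edgeFinset, abcF G e := ABC_spec G
  -- degrees
  have hdeg2 : ∀ v : V, 2 ≤ G.degree v := by
    intro v
    calc 2 ≤ minDeg G := hδ
    _ = G.minDegree := minDeg_spec G
    _ ≤ G.degree v := G.minDegree_le_degree v
  have hdegn : ∀ v : V, G.degree v < n := by
    intro v; rw [hn]; exact G.degree_lt_card_verts v
  have hn3 : 3 ≤ n := by
    obtain ⟨v⟩ := hconn.nonempty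
    have := hdeg2 v; have := hdegn v; omega
  have hN : (2:ℝ) ≤ (n:ℝ) - 1 := by
    have : (3:ℝ) ≤ (n:ℝ) := by exact_mod_cast hn3
    linarith
  have hdegR2 : ∀ v : V, (2:ℝ) ≤ (G.degree v : ℝ) := fun v => by exact_mod_cast hdeg2 v
  have hdegRN : ∀ v : V, (G.degree v : ℝ) ≤ (n:ℝ) - 1 := by
    intro v
    have : (G.degree v : ℝ) + 1 ≤ (n:ℝ) := by exact_mod_cast hdegn v
    linarith
  -- per-edge inequalities
  have perA : ∀ e ∈ G.edgeFinset,
      (Real.sqrt (2 * ((n : ℝ) - 2)) / ((n : ℝ) - 1)) * gaF G e ≤ abcF G e := by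
    intro e
    induction e using Sym2.ind with
    | _ u v =>
      intro _
      rw [gaF_mk, abcF_mk]
      have h := aux_sqrtA ((n:ℝ)-1) _ _ hN (hdegR2 u) (hdegRN u) (hdegR2 v) (hdegRN v)
      rwa [show 2*(((n:ℝ)-1)-1) = 2*((n:ℝ)-2) by ring] at h
  have perB : ∀ e ∈ G.edgeFinset,
      abcF G e ≤ (((n : ℝ) + 1) / (4 * Real.sqrt ((n : ℝ) - 1))) * gaF G e := by
    intro e
    induction e using Sym2.ind with
    | _ u v =>
      intro _
      rw [gaF_mk, abcF_mk]
      have h := aux_sqrtB ((n:ℝ)-1) _ _ hN (hdegR2 u) (hdegRN u) (hdegR2 v) (hdegRN v)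
      rwa [show ((n:ℝ)-1)+2 = (n:ℝ)+1 by ring] at h
  have ineqA : (Real.sqrt (2 * ((n : ℝ) - 2)) / ((n : ℝ) - 1)) * GA G ≤ ABC G := by
    rw [hGA, hABC, Finset.mul_sum]
    exact Finset.sum_le_sum perA
  have ineqB : ABC G ≤ (((n : ℝ) + 1) / (4 * Real.sqrt ((n : ℝ) - 1))) * GA G := by
    rw [hGA, hABC, Finset.mul_sum]
    exact Finset.sum_le_sum perB
  refine ⟨ineqA, ineqB, ?_, ?_⟩
  · -- equality A iff complete
    constructor
    · intro h
      have hdeg_all : ∀ v : V, G.degree v = n - 1 := by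
        by_contra hc
        push_neg at hc
        obtain ⟨v, hv⟩ := hc
        have hvlt : (G.degree v : ℝ) < (n:ℝ) - 1 := by
          have h1 : G.degree v + 1 ≤ n := hdegn v
          have h2 : G.degree v ≠ n - 1 := hv
          have h3 : G.degree v + 1 < n := by omega
          have : (G.degree v : ℝ) + 1 < (n:ℝ) := by exact_mod_cast h3
          linarith
        obtain ⟨w, hw⟩ := (G.degree_pos_iff_exists_adj v).mp (by have := hdeg2 v; omega)
        have hmem : s(v, w) ∈ G.edgeFinset := by
          rw [SimpleGraph.mem_edgeFinset, SimpleGraph.mem_edgeSet]; exact hw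
        have hstrict : (Real.sqrt (2 * ((n : ℝ) - 2)) / ((n : ℝ) - 1)) * gaF G s(v,w)
            < abcF G s(v,w) := by
          rw [gaF_mk, abcF_mk]
          have hs := aux_sqrtA_strict ((n:ℝ)-1) _ _ hN (hdegR2 v) (hdegRN v) (hdegR2 w) (hdegRN w)
            (Or.inl hvlt)
          rwa [show 2*(((n:ℝ)-1)-1) = 2*((n:ℝ)-2) by ring] at hs
        have hlt := Finset.sum_lt_sum perA ⟨s(v,w), hmem, hstrict⟩
        rw [hGA, hABC, Finset.mul_sum] at h
        exact absurd h (ne_of_lt hlt)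
      have hGtop : G = ⊤ := aux_top G (fun v => by rw [hdeg_all v, hn])
      rw [hGtop]
      exact ⟨Iso.refl⟩
    · rintro ⟨φ⟩
      have hadj : ∀ u v : V, u ≠ v → G.Adj u v := by
        intro u v huv
        refine φ.map_adj_iff.mp ?_
        simp only [top_adj]
        exact fun hEq => huv (φ.toEquiv.injective hEq)
      have hdeg_all : ∀ v : V, G.degree v = n - 1 := by
        intro v; rw [aux_deg_of_adj_all G hadj v, hn]
      have hcast : ((n - 1 : ℕ) : ℝ) = (n:ℝ) - 1 := by
        rw [Nat.cast_sub (by omega), Nat.cast_one]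
      rw [hGA, hABC, Finset.mul_sum]
      refine Finset.sum_congr rfl ?_
      intro e
      induction e using Sym2.ind with
      | _ u v =>
        intro _
        rw [gaF_mk, abcF_mk, hdeg_all u, hdeg_all v, hcast]
        have h := aux_eqA ((n:ℝ)-1) hN
        rwa [show 2*(((n:ℝ)-1)-1) = 2*((n:ℝ)-2) by ring] at h
  · -- equality B iff C3
    constructor
    · intro h
      have hedge : ∀ u v : V, G.Adj u v →
          (((G.degree u : ℝ) = 2 ∧ (G.degree v : ℝ) = (n:ℝ)-1) ∨
           ((G.degree u : ℝ) = (n:ℝ)-1 ∧ (G.degree v : ℝ) = 2)) := by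
        intro u v huv
        by_contra hc
        have hmem : s(u, v) ∈ G.edgeFinset := by
          rw [SimpleGraph.mem_edgeFinset, SimpleGraph.mem_edgeSet]; exact huv
        have hstrict : abcF G s(u,v)
            < (((n : ℝ) + 1) / (4 * Real.sqrt ((n : ℝ) - 1))) * gaF G s(u,v) := by
          rw [gaF_mk, abcF_mk]
          have hs := aux_sqrtB_strict ((n:ℝ)-1) _ _ hN (hdegR2 u) (hdegRN u) (hdegR2 v) (hdegRN v) hc
          rwa [show ((n:ℝ)-1)+2 = (n:ℝ)+1 by ring] at hs
        have hlt := Finset.sum_lt_sum perB ⟨s(u,v), hmem, hstrict⟩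
        rw [hGA, hABC, Finset.mul_sum] at h
        exact absurd h (ne_of_lt hlt)
      -- natural-number version
      have hedge' : ∀ u v : V, G.Adj u v →
          ((G.degree u = 2 ∧ G.degree v = n - 1) ∨ (G.degree u = n - 1 ∧ G.degree v = 2)) := by
        intro u v huv
        have hcast : ((n - 1 : ℕ) : ℝ) = (n:ℝ) - 1 := by
          rw [Nat.cast_sub (by omega), Nat.cast_one]
        rcases hedge u v huv with ⟨h1, h2⟩ | ⟨h1, h2⟩
        · left
          constructor
          · exact_mod_cast h1
          · rw [← hcast] at h2; exact_mod_cast h2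
        · right
          constructor
          · rw [← hcast] at h1; exact_mod_cast h1
          · exact_mod_cast h2
      have hn_eq : n = 3 := by
        by_contra hne3
        have hn4 : 4 ≤ n := by omega
        obtain ⟨v0⟩ := hconn.nonempty
        obtain ⟨w0, hw0⟩ := (G.degree_pos_iff_exists_adj v0).mp (by have := hdeg2 v0; omega)
        obtain ⟨u, hu⟩ : ∃ u : V, G.degree u = n - 1 := by
          rcases hedge' v0 w0 hw0 with ⟨h1, h2⟩ | ⟨h1, h2⟩
          · exact ⟨w0, h2⟩
          · exact ⟨v0, h1⟩
        have huadj : ∀ w, w ≠ u → G.Adj u w := aux_adj_all G u (by rw [hu, hn])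
        have : Nontrivial V := Fintype.one_lt_card_iff_nontrivial.mp (by omega)
        obtain ⟨w, hwne⟩ := exists_ne u
        have hw2 : G.degree w = 2 := by
          rcases hedge' u w (huadj w hwne) with ⟨h1, h2⟩ | ⟨h1, h2⟩
          · rw [hu] at h1; omega
          · exact h2
        obtain ⟨w', hw'mem, hw'u⟩ : ∃ w' ∈ G.neighborFinset w, w' ≠ u := by
          by_contra hc
          push_neg at hc
          have hsub : G.neighborFinset w ⊆ {u} := fun x hx => Finset.mem_singleton.mpr (hc x hx)
          have := Finset.card_le_card hsub
          rw [G.card_neighborFinset_eq_degree, hw2, Finset.card_singleton] at this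
          omega
        have hadww' : G.Adj w w' := (SimpleGraph.mem_neighborFinset _ _ _).mp hw'mem
        have hw'2 : G.degree w' = 2 := by
          rcases hedge' u w' (huadj w' (Ne.symm (Ne.symm hw'u))) with ⟨h1, h2⟩ | ⟨h1, h2⟩
          · rw [hu] at h1; omega
          · exact h2
        rcases hedge' w w' hadww' with ⟨h1, h2⟩ | ⟨h1, h2⟩
        · omega
        · omega
      have hdeg_all : ∀ v : V, G.degree v = 2 := by
        intro v
        have := hdeg2 v; have := hdegn v
        omega
      have hGtop : G = ⊤ := aux_top G (fun v => by rw [hdeg_all v, ← hn, hn_eq])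
      have hcard : Fintype.card V = 3 := by omega
      rw [hGtop, aux_cycle3]
      exact ⟨Iso.completeGraph (Fintype.equivFinOfCardEq hcard)⟩
    · rintro ⟨φ⟩
      have hcard : Fintype.card V = 3 := by
        have := φ.card_eq
        simpa using this
      have hn_eq : n = 3 := by omega
      have h3 : ∀ a b : Fin 3, a ≠ b → (cycleGraph 3).Adj a b := by
        rw [aux_cycle3]; exact fun a b hab => hab
      have hadj : ∀ u v : V, u ≠ v → G.Adj u v := by
        intro u v huv
        exact φ.map_adj_iff.mp (h3 _ _ (fun hEq => huv (φ.toEquiv.injective hEq)))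
      have hdeg_all : ∀ v : V, G.degree v = 2 := by
        intro v; rw [aux_deg_of_adj_all G hadj v, hcard]
      rw [hGA, hABC, Finset.mul_sum]
      refine Finset.sum_congr rfl ?_
      intro e
      induction e using Sym2.ind with
      | _ u v =>
        intro _
        rw [gaF_mk, abcF_mk, hdeg_all u, hdeg_all v]
        push_cast
        rw [hn_eq]
        rw [show ((3:ℕ):ℝ) + 1 = (2:ℝ)+2 by norm_num, show ((3:ℕ):ℝ) - 1 = (2:ℝ) by norm_num]
        exact aux_eqB
end
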